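/- arXiv:1109.4898 — 2 statements merged into one kernel-verified Lean document; each statement's English description precedes it below -/
import Mathlib

section
/- Let 𝕂 be ℝ or ℂ, let 1 ≤ p_1, …, p_n ≤ q ≤ s < ∞, and let E_1, …, E_n, F be Banach spaces over 𝕂. Let A : E_1 × ⋯ × E_n → F be a continuous n-linear operator such that for every Banach space G over 𝕂 and every absolutely s-summing linear operator u : F → G, the composition u ∘ A is multiple (q;p_1,…,p_n)-summing. Then A is multiple (s,q;p_1,…,p_n)-mixing summing. -/
open scoped BigOperators
noncomputable section

/-- The weak `ℓ^q` norm of a finite family in a normed space: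
`sup_{‖φ‖ ≤ 1} (∑_j |φ(x_j)|^q)^{1/q}`. -/
def weakLpNorm (𝕂 : Type*) [RCLike 𝕂] {E : Type*} [NormedAddCommGroup E] [NormedSpace 𝕂 E]
    {J : Type*} [Fintype J] (q : ℝ) (x : J → E) : ℝ :=
  ⨆ φ : {φ : E →L[𝕂] 𝕂 // ‖φ‖ ≤ 1}, (∑ j, ‖φ.1 (x j)‖ ^ q) ^ (1 / q)

/-- `T` is multiple `(p;p₁,…,pₙ)`-summing. -/
def MultipleSumming (𝕂 : Type*) [RCLike 𝕂] {n : ℕ} {E : Fin n → Type*}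
    [∀ i, NormedAddCommGroup (E i)] [∀ i, NormedSpace 𝕂 (E i)]
    {G : Type*} [NormedAddCommGroup G] [NormedSpace 𝕂 G]
    (p : ℝ) (q : Fin n → ℝ) (T : ((i : Fin n) → E i) → G) : Prop :=
  ∃ C : ℝ, 0 ≤ C ∧ ∀ (m : ℕ) (x : (i : Fin n) → Fin m → E i),
    (∑ j : Fin n → Fin m, ‖T (fun i => x i (j i))‖ ^ p) ^ (1 / p) ≤
      C * ∏ i, weakLpNorm 𝕂 (q i) (x i)

/-- The multiple `(p;p₁,…,pₙ)`-summing norm of `T`: the infimum of the admissible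
constants. -/
def masNorm (𝕂 : Type*) [RCLike 𝕂] {n : ℕ} {E : Fin n → Type*}
    [∀ i, NormedAddCommGroup (E i)] [∀ i, NormedSpace 𝕂 (E i)]
    {G : Type*} [NormedAddCommGroup G] [NormedSpace 𝕂 G]
    (p : ℝ) (q : Fin n → ℝ) (T : ((i : Fin n) → E i) → G) : ℝ :=
  sInf { C : ℝ | 0 ≤ C ∧ ∀ (m : ℕ) (x : (i : Fin n) → Fin m → E i),
    (∑ j : Fin n → Fin m, ‖T (fun i => x i (j i))‖ ^ p) ^ (1 / p) ≤
      C * ∏ i, weakLpNorm 𝕂 (q i) (x i) }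

/-- `u` is an absolutely `r`-summing linear operator. -/
def AbsolutelySummingOp (𝕂 : Type*) [RCLike 𝕂] {F G : Type*}
    [NormedAddCommGroup F] [NormedSpace 𝕂 F] [NormedAddCommGroup G] [NormedSpace 𝕂 G]
    (r : ℝ) (u : F →L[𝕂] G) : Prop :=
  ∃ C : ℝ, 0 ≤ C ∧ ∀ (k : ℕ) (y : Fin k → F),
    (∑ j : Fin k, ‖u (y j)‖ ^ r) ^ (1 / r) ≤ C * weakLpNorm 𝕂 r y

/-- The absolutely `r`-summing norm `π_r(u)`. -/
def piNorm (𝕂 : Type*) [RCLike 𝕂] {F G : Type*}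
    [NormedAddCommGroup F] [NormedSpace 𝕂 F] [NormedAddCommGroup G] [NormedSpace 𝕂 G]
    (r : ℝ) (u : F →L[𝕂] G) : ℝ :=
  sInf { C : ℝ | 0 ≤ C ∧ ∀ (k : ℕ) (y : Fin k → F),
    (∑ j : Fin k, ‖u (y j)‖ ^ r) ^ (1 / r) ≤ C * weakLpNorm 𝕂 r y }

/-- The mixed `(s,q)`-norm of a finite family `z` in `F`:
`inf ‖(τ_j)‖_{ℓ^ρ} ‖(y_j)‖_{w,s}` over factorizations `z_j = τ_j • y_j`, where
`1/ρ = 1/q - 1/s` (so `ρ = ∞`, i.e. the sup norm, when `s = q`). -/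
def mixedNorm (𝕂 : Type*) [RCLike 𝕂] {F : Type*} [NormedAddCommGroup F] [NormedSpace 𝕂 F]
    {J : Type*} [Fintype J] (s q : ℝ) (z : J → F) : ℝ :=
  sInf { c : ℝ | ∃ τ : J → 𝕂, ∃ y : J → F, (∀ j, z j = τ j • y j) ∧
      c = (if s = q then ⨆ j, ‖τ j‖
           else (∑ j, ‖τ j‖ ^ (1 / q - 1 / s)⁻¹) ^ (1 / q - 1 / s)) * weakLpNorm 𝕂 s y }

/-- `A` is multiple `(s,q;p₁,…,pₙ)`-mixing summing. -/
def MultipleMixingSumming (𝕂 : Type*) [RCLike 𝕂] {n : ℕ} {E : Fin n → Type*}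
    [∀ i, NormedAddCommGroup (E i)] [∀ i, NormedSpace 𝕂 (E i)]
    {F : Type*} [NormedAddCommGroup F] [NormedSpace 𝕂 F]
    (s q : ℝ) (p : Fin n → ℝ) (A : ((i : Fin n) → E i) → F) : Prop :=
  ∃ σ : ℝ, 0 ≤ σ ∧ ∀ (m : ℕ) (x : (i : Fin n) → Fin m → E i),
    mixedNorm 𝕂 s q (fun j : Fin n → Fin m => A (fun i => x i (j i))) ≤
      σ * ∏ i, weakLpNorm 𝕂 (p i) (x i)

/-- The multiple `(s,q;p₁,…,pₙ)`-mixing summing norm of `A`. -/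
def mixingNorm (𝕂 : Type*) [RCLike 𝕂] {n : ℕ} {E : Fin n → Type*}
    [∀ i, NormedAddCommGroup (E i)] [∀ i, NormedSpace 𝕂 (E i)]
    {F : Type*} [NormedAddCommGroup F] [NormedSpace 𝕂 F]
    (s q : ℝ) (p : Fin n → ℝ) (A : ((i : Fin n) → E i) → F) : ℝ :=
  sInf { σ : ℝ | 0 ≤ σ ∧ ∀ (m : ℕ) (x : (i : Fin n) → Fin m → E i),
    mixedNorm 𝕂 s q (fun j : Fin n → Fin m => A (fun i => x i (j i))) ≤
      σ * ∏ i, weakLpNorm 𝕂 (p i) (x i) }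


section AllAux
open scoped ENNReal
section AuxA
variable {𝕂 : Type*} [RCLike 𝕂] {E : Type*} [NormedAddCommGroup E] [NormedSpace 𝕂 E]
  {J : Type*} [Fintype J]

lemma wlp_nonneg (r : ℝ) (x : J → E) : 0 ≤ weakLpNorm 𝕂 r x :=
  Real.iSup_nonneg fun _ => Real.rpow_nonneg
    (Finset.sum_nonneg fun j _ => Real.rpow_nonneg (norm_nonneg _) _) _

lemma le_wlp {r : ℝ} (hr : 0 ≤ r) (x : J → E) (φ : E →L[𝕂] 𝕂) (hφ : ‖φ‖ ≤ 1) :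
    (∑ j, ‖φ (x j)‖ ^ r) ^ (1 / r) ≤ weakLpNorm 𝕂 r x := by
  have hbdd : BddAbove (Set.range fun ψ : {ψ : E →L[𝕂] 𝕂 // ‖ψ‖ ≤ 1} =>
      (∑ j, ‖ψ.1 (x j)‖ ^ r) ^ (1 / r)) := by
    refine ⟨(∑ j, ‖x j‖ ^ r) ^ (1 / r), ?_⟩
    rintro _ ⟨ψ, rfl⟩
    refine Real.rpow_le_rpow (Finset.sum_nonneg fun j _ => Real.rpow_nonneg (norm_nonneg _) _)
      (Finset.sum_le_sum fun j _ => Real.rpow_le_rpow (norm_nonneg _) ?_ hr)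
      (by positivity)
    calc ‖ψ.1 (x j)‖ ≤ ‖ψ.1‖ * ‖x j‖ := ψ.1.le_opNorm _
    _ ≤ 1 * ‖x j‖ := by gcongr; exact ψ.2
    _ = ‖x j‖ := one_mul _
  exact le_ciSup hbdd ⟨φ, hφ⟩

lemma sum_le_wlp_rpow {r : ℝ} (hr : 0 < r) (x : J → E) (φ : E →L[𝕂] 𝕂) (hφ : ‖φ‖ ≤ 1) :
    ∑ j, ‖φ (x j)‖ ^ r ≤ (weakLpNorm 𝕂 r x) ^ r := by
  have h := Real.rpow_le_rpow (Real.rpow_nonneg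
    (Finset.sum_nonneg fun j _ => Real.rpow_nonneg (norm_nonneg _) _) _)
    (le_wlp hr.le x φ hφ) hr.le
  rwa [← Real.rpow_mul (Finset.sum_nonneg fun j _ => Real.rpow_nonneg (norm_nonneg _) _),
    one_div, inv_mul_cancel₀ hr.ne', Real.rpow_one] at h

lemma sum_apply_le {r : ℝ} (hr : 0 < r) (ψ : E →L[𝕂] 𝕂) (x : J → E) :
    ∑ j, ‖ψ (x j)‖ ^ r ≤ ‖ψ‖ ^ r * (weakLpNorm 𝕂 r x) ^ r := by
  rcases eq_or_ne ψ 0 with rfl | hne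
  · simp only [ContinuousLinearMap.zero_apply, norm_zero, Real.zero_rpow hr.ne',
      Finset.sum_const_zero, Real.zero_rpow hr.ne', zero_mul]
    exact le_rfl
  · have hψ0 : (0:ℝ) < ‖ψ‖ := norm_pos_iff.mpr hne
    set φ : E →L[𝕂] 𝕂 := ((‖ψ‖⁻¹ : ℝ) : 𝕂) • ψ with hφdef
    have happ : ∀ z : E, ‖φ z‖ = ‖ψ‖⁻¹ * ‖ψ z‖ := by
      intro z
      rw [hφdef, ContinuousLinearMap.smul_apply, smul_eq_mul, norm_mul, RCLike.norm_ofReal,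
        abs_of_nonneg (inv_nonneg.2 hψ0.le)]
    have hφn : ‖φ‖ ≤ 1 := by
      refine ContinuousLinearMap.opNorm_le_bound φ zero_le_one fun z => ?_
      rw [happ z, one_mul]
      calc ‖ψ‖⁻¹ * ‖ψ z‖ ≤ ‖ψ‖⁻¹ * (‖ψ‖ * ‖z‖) := by
            exact mul_le_mul_of_nonneg_left (ψ.le_opNorm z) (inv_nonneg.2 hψ0.le)
      _ = ‖z‖ := by field_simp
    have key := sum_le_wlp_rpow hr x φ hφn
    have : ∑ j, ‖φ (x j)‖ ^ r = ‖ψ‖⁻¹ ^ r * ∑ j, ‖ψ (x j)‖ ^ r := by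
      rw [Finset.mul_sum]
      refine Finset.sum_congr rfl fun j _ => ?_
      rw [happ (x j), Real.mul_rpow (inv_nonneg.2 hψ0.le) (norm_nonneg _)]
    rw [this] at key
    calc ∑ j, ‖ψ (x j)‖ ^ r = ‖ψ‖ ^ r * (‖ψ‖⁻¹ ^ r * ∑ j, ‖ψ (x j)‖ ^ r) := by
          rw [← mul_assoc, ← Real.mul_rpow hψ0.le (inv_nonneg.2 hψ0.le), mul_inv_cancel₀ hψ0.ne',
            Real.one_rpow, one_mul]
    _ ≤ ‖ψ‖ ^ r * (weakLpNorm 𝕂 r x) ^ r := by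
          exact mul_le_mul_of_nonneg_left key (Real.rpow_nonneg hψ0.le _)

end AuxA

section AuxB
universe uu
variable {𝕂 : Type*} [RCLike 𝕂] {F : Type*} [NormedAddCommGroup F] [NormedSpace 𝕂 F]

lemma exists_comp {s : ℝ} (hs : 1 ≤ s) (ι : Type) (ψ : ι → F →L[𝕂] 𝕂)
    (hψ : Summable fun k => ‖ψ k‖ ^ s) :
    ∃ (G : Type uu) (_ : NormedAddCommGroup G) (_ : NormedSpace 𝕂 G) (_ : CompleteSpace G)
      (u : F →L[𝕂] G), AbsolutelySummingOp 𝕂 s u ∧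
        ∀ z : F, ‖u z‖ = (∑' k, ‖ψ k z‖ ^ s) ^ (1 / s) := by
  have hs0 : (0:ℝ) < s := lt_of_lt_of_le one_pos hs
  set pp : ℝ≥0∞ := ENNReal.ofReal s with hpp
  haveI : Fact (1 ≤ pp) := ⟨by rw [hpp]; exact ENNReal.one_le_ofReal.mpr hs⟩
  have hptr : pp.toReal = s := ENNReal.toReal_ofReal hs0.le
  have hsummz : ∀ z : F, Summable fun k => ‖ψ k z‖ ^ s := by
    intro z
    refine Summable.of_nonneg_of_le (fun k => Real.rpow_nonneg (norm_nonneg _) _)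
      (fun k => ?_) (hψ.mul_right (‖z‖ ^ s))
    rw [← Real.mul_rpow (norm_nonneg _) (norm_nonneg _)]
    exact Real.rpow_le_rpow (norm_nonneg _) ((ψ k).le_opNorm z) hs0.le
  have hmem : ∀ z : F, Memℓp (fun k => ψ k z) pp := by
    intro z
    apply memℓp_gen
    rw [hptr]
    exact hsummz z
  set L := lp (fun _ : ι => 𝕂) pp with hL
  set u0 : F →ₗ[𝕂] L :=
    { toFun := fun z => ⟨fun k => ψ k z, hmem z⟩
      map_add' := fun a b => Subtype.ext (funext fun k => (ψ k).map_add a b)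
      map_smul' := fun c a => Subtype.ext (funext fun k => (ψ k).map_smul c a) } with hu0
  have hnorm : ∀ z : F, ‖u0 z‖ = (∑' k, ‖ψ k z‖ ^ s) ^ (1 / s) := by
    intro z
    have h := lp.norm_eq_tsum_rpow (p := pp) (by rw [hptr]; exact hs0) (u0 z)
    rw [hptr] at h
    exact h
  have htsum0 : (0:ℝ) ≤ ∑' k, ‖ψ k‖ ^ s :=
    tsum_nonneg fun k => Real.rpow_nonneg (norm_nonneg _) _
  set C : ℝ := (∑' k, ‖ψ k‖ ^ s) ^ (1/s) with hCdef
  have hC0 : 0 ≤ C := Real.rpow_nonneg htsum0 _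
  have hbound : ∀ z, ‖u0 z‖ ≤ C * ‖z‖ := by
    intro z
    rw [hnorm z]
    have h1 : ∑' k, ‖ψ k z‖ ^ s ≤ (∑' k, ‖ψ k‖ ^ s) * ‖z‖ ^ s := by
      rw [← tsum_mul_right]
      refine Summable.tsum_le_tsum (fun k => ?_) (hsummz z) (hψ.mul_right _)
      rw [← Real.mul_rpow (norm_nonneg _) (norm_nonneg _)]
      exact Real.rpow_le_rpow (norm_nonneg _) ((ψ k).le_opNorm z) hs0.le
    calc (∑' k, ‖ψ k z‖ ^ s) ^ (1/s) ≤ ((∑' k, ‖ψ k‖ ^ s) * ‖z‖ ^ s) ^ (1/s) :=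
          Real.rpow_le_rpow (tsum_nonneg fun k => Real.rpow_nonneg (norm_nonneg _) _) h1
            (by positivity)
    _ = C * ‖z‖ := by
          rw [Real.mul_rpow htsum0 (Real.rpow_nonneg (norm_nonneg _) _),
            ← Real.rpow_mul (norm_nonneg z), mul_one_div, div_self hs0.ne', Real.rpow_one]
  set uψ : F →L[𝕂] L := u0.mkContinuous C hbound with huψ
  have huψa : ∀ z, uψ z = u0 z := fun z => rfl
  -- absolutely summing for uψ
  have habs : ∀ (k : ℕ) (y : Fin k → F),
      (∑ j : Fin k, ‖uψ (y j)‖ ^ s) ^ (1 / s) ≤ C * weakLpNorm 𝕂 s y := by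
    intro N y
    have hterm : ∀ j, ‖uψ (y j)‖ ^ s = ∑' k, ‖ψ k (y j)‖ ^ s := by
      intro j
      rw [huψa, hnorm, ← Real.rpow_mul (tsum_nonneg fun k => Real.rpow_nonneg (norm_nonneg _) _),
        one_div, inv_mul_cancel₀ hs0.ne', Real.rpow_one]
    have hswap : ∑ j : Fin N, ‖uψ (y j)‖ ^ s = ∑' k, ∑ j : Fin N, ‖ψ k (y j)‖ ^ s := by
      simp_rw [hterm]
      exact (Summable.tsum_finsetSum fun j _ => hsummz (y j)).symm
    have hle : ∑' k, ∑ j : Fin N, ‖ψ k (y j)‖ ^ s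
        ≤ (∑' k, ‖ψ k‖ ^ s) * (weakLpNorm 𝕂 s y) ^ s := by
      rw [← tsum_mul_right]
      refine Summable.tsum_le_tsum (fun k => sum_apply_le hs0 (ψ k) y)
        (summable_sum fun j _ => hsummz (y j)) (hψ.mul_right _)
    calc (∑ j : Fin N, ‖uψ (y j)‖ ^ s) ^ (1/s)
        ≤ ((∑' k, ‖ψ k‖ ^ s) * (weakLpNorm 𝕂 s y) ^ s) ^ (1/s) := by
          rw [hswap]
          refine Real.rpow_le_rpow ?_ hle (by positivity)
          exact tsum_nonneg fun k => Finset.sum_nonneg fun j _ => Real.rpow_nonneg (norm_nonneg _) _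
    _ = C * weakLpNorm 𝕂 s y := by
          rw [Real.mul_rpow htsum0 (Real.rpow_nonneg (wlp_nonneg s y) _),
            ← Real.rpow_mul (wlp_nonneg s y), mul_one_div, div_self hs0.ne', Real.rpow_one]
  -- shrink to universe uu
  haveI hsmall : Small.{uu} 𝕂 := by
    have : Function.Injective (fun z : 𝕂 => (RCLike.re z, RCLike.im z)) := by
      intro a b hab
      exact RCLike.ext (congrArg Prod.fst hab) (congrArg Prod.snd hab)
    exact small_of_injective this
  haveI hsmallL : Small.{uu} L := by
    have : Function.Injective (fun f : L => (f : ∀ _ : ι, 𝕂)) := Subtype.val_injective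
    exact small_of_injective this
  let e : Shrink.{uu} L ≃ₗ[𝕂] L := Shrink.linearEquiv 𝕂 L
  have hiso : ∀ x : Shrink.{uu} L, ‖e x‖ = ‖x‖ := fun x => rfl
  let li : Shrink.{uu} L ≃ₗᵢ[𝕂] L := ⟨e, hiso⟩
  letI : CompleteSpace (Shrink.{uu} L) := li.toIsometryEquiv.completeSpace_iff.mpr inferInstance
  refine ⟨Shrink.{uu} L, inferInstance, inferInstance, inferInstance,
    (li.symm.toLinearIsometry.toContinuousLinearMap).comp uψ, ?_, ?_⟩
  · refine ⟨C, hC0, fun N y => ?_⟩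
    have : ∀ j : Fin N, ‖(li.symm.toLinearIsometry.toContinuousLinearMap).comp uψ (y j)‖
        = ‖uψ (y j)‖ := by
      intro j
      simp only [ContinuousLinearMap.comp_apply, LinearIsometry.coe_toContinuousLinearMap]
      exact li.symm.toLinearIsometry.norm_map _
    simp_rw [this]
    exact habs N y
  · intro z
    have h1 : ‖(li.symm.toLinearIsometry.toContinuousLinearMap).comp uψ z‖ = ‖uψ z‖ := by
      simp only [ContinuousLinearMap.comp_apply, LinearIsometry.coe_toContinuousLinearMap]
      exact li.symm.toLinearIsometry.norm_map _
    rw [h1, huψa, hnorm]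

end AuxB

section AuxC
variable {𝕂 : Type*} [RCLike 𝕂] {F : Type*} [NormedAddCommGroup F] [NormedSpace 𝕂 F]

lemma uniform_bound {s q : ℝ} (hs1 : 1 ≤ s) (hq0 : 0 < q)
    {M : Type*} {J : M → Type} [∀ m, Fintype (J m)] (z : ∀ m, J m → F) (P : M → ℝ)
    (hP : ∀ m, 0 ≤ P m)
    (H : ∀ (ι : Type) (ψ : ι → F →L[𝕂] 𝕂), Summable (fun k => ‖ψ k‖ ^ s) →
      ∃ C, 0 ≤ C ∧ ∀ m, (∑ j : J m, (∑' k, ‖ψ k (z m j)‖ ^ s) ^ (q/s)) ^ (1/q) ≤ C * P m) :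
    ∃ σ, 0 ≤ σ ∧ ∀ (m : M) (ι₀ : Type) (tt : Finset ι₀) (w : ι₀ → ℝ) (φ : ι₀ → F →L[𝕂] 𝕂),
      (∀ i ∈ tt, 0 ≤ w i) → (∑ i ∈ tt, w i) ≤ 1 → (∀ i ∈ tt, ‖φ i‖ ≤ 1) →
      (∑ j : J m, (∑ i ∈ tt, w i * ‖φ i (z m j)‖ ^ s) ^ (q/s)) ^ (1/q) ≤ σ * P m := by
  have hs0 : (0:ℝ) < s := lt_of_lt_of_le one_pos hs1
  by_contra hcon
  push_neg at hcon
  have hviol : ∀ t : ℕ, ∃ (m : M) (ι₀ : Type) (tt : Finset ι₀) (w : ι₀ → ℝ)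
      (φ : ι₀ → F →L[𝕂] 𝕂), (∀ i ∈ tt, 0 ≤ w i) ∧ (∑ i ∈ tt, w i) ≤ 1 ∧
      (∀ i ∈ tt, ‖φ i‖ ≤ 1) ∧
      (4:ℝ)^t * P m < (∑ j : J m, (∑ i ∈ tt, w i * ‖φ i (z m j)‖ ^ s) ^ (q/s)) ^ (1/q) := by
    intro t
    exact hcon ((4:ℝ)^t) (by positivity)
  choose m ι₀ tt w φ hw0 hw1 hφ1 hlt using hviol
  set I : Type := Σ t : ℕ, {i // i ∈ tt t} with hI
  set d : ℕ → ℝ := fun t => (1/2 : ℝ)^t with hd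
  have hd0 : ∀ t, 0 < d t := fun t => by positivity
  have hd1 : ∀ t, d t ≤ 1 := fun t => pow_le_one₀ (by norm_num) (by norm_num)
  set c : I → ℝ := fun k => d k.1 * (w k.1 k.2.1) ^ (1/s) with hc
  have hc0 : ∀ k : I, 0 ≤ c k := fun k =>
    mul_nonneg (hd0 k.1).le (Real.rpow_nonneg (hw0 k.1 k.2.1 k.2.2) _)
  set Ψ : I → F →L[𝕂] 𝕂 := fun k => ((c k : ℝ) : 𝕂) • φ k.1 k.2.1 with hΨ
  have hΨapp : ∀ (k : I) (v : F), ‖Ψ k v‖ = c k * ‖φ k.1 k.2.1 v‖ := by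
    intro k v
    rw [hΨ]
    simp only [ContinuousLinearMap.smul_apply, smul_eq_mul, norm_mul, RCLike.norm_ofReal,
      abs_of_nonneg (hc0 k)]
  have hΨop : ∀ k : I, ‖Ψ k‖ ≤ c k := by
    intro k
    refine ContinuousLinearMap.opNorm_le_bound _ (hc0 k) fun v => ?_
    rw [hΨapp k v]
    refine mul_le_mul_of_nonneg_left ?_ (hc0 k)
    calc ‖φ k.1 k.2.1 v‖ ≤ ‖φ k.1 k.2.1‖ * ‖v‖ := (φ k.1 k.2.1).le_opNorm v
      _ ≤ 1 * ‖v‖ := mul_le_mul_of_nonneg_right (hφ1 k.1 k.2.1 k.2.2) (norm_nonneg _)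
      _ = ‖v‖ := one_mul _
  have hcs : ∀ k : I, (c k) ^ s = (d k.1) ^ s * w k.1 k.2.1 := by
    intro k
    rw [hc]
    rw [Real.mul_rpow (hd0 k.1).le (Real.rpow_nonneg (hw0 k.1 k.2.1 k.2.2) _),
      ← Real.rpow_mul (hw0 k.1 k.2.1 k.2.2), one_div, inv_mul_cancel₀ hs0.ne', Real.rpow_one]
  -- summability
  have hsum_outer : ∀ t : ℕ, ∑ i : {i // i ∈ tt t}, c ⟨t, i⟩ ^ s ≤ d t := by
    intro t
    have : ∑ i : {i // i ∈ tt t}, c ⟨t, i⟩ ^ s = (d t) ^ s * ∑ i ∈ tt t, w t i := by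
      rw [Finset.mul_sum, ← Finset.sum_coe_sort (tt t) (fun i => (d t) ^ s * w t i)]
      exact Finset.sum_congr rfl fun i _ => hcs ⟨t, i⟩
    rw [this]
    calc (d t) ^ s * ∑ i ∈ tt t, w t i ≤ (d t) ^ s * 1 :=
          mul_le_mul_of_nonneg_left (hw1 t) (Real.rpow_nonneg (hd0 t).le _)
    _ = (d t) ^ s := mul_one _
    _ ≤ (d t) ^ (1:ℝ) := Real.rpow_le_rpow_of_exponent_ge (hd0 t) (hd1 t) hs1
    _ = d t := Real.rpow_one _
  have hsumΨ : Summable fun k : I => ‖Ψ k‖ ^ s := by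
    refine (summable_sigma_of_nonneg fun k => Real.rpow_nonneg (norm_nonneg _) _).2
      ⟨fun t => (hasSum_fintype _).summable, ?_⟩
    refine Summable.of_nonneg_of_le
      (fun t => tsum_nonneg fun i => Real.rpow_nonneg (norm_nonneg _) _) (fun t => ?_)
      (summable_geometric_of_lt_one (by norm_num) (by norm_num : (1/2:ℝ) < 1))
    rw [tsum_fintype]
    calc ∑ i : {i // i ∈ tt t}, ‖Ψ ⟨t, i⟩‖ ^ s ≤ ∑ i : {i // i ∈ tt t}, c ⟨t, i⟩ ^ s :=
          Finset.sum_le_sum fun i _ =>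
            Real.rpow_le_rpow (norm_nonneg _) (hΨop ⟨t, i⟩) hs0.le
    _ ≤ d t := hsum_outer t
  obtain ⟨C, hC0, hCb⟩ := H I Ψ hsumΨ
  obtain ⟨t, ht⟩ := pow_unbounded_of_one_lt C (one_lt_two (α := ℝ))
  -- lower bound the tsum by the t-block
  have hsummz : ∀ v : F, Summable fun k : I => ‖Ψ k v‖ ^ s := by
    intro v
    refine Summable.of_nonneg_of_le (fun k => Real.rpow_nonneg (norm_nonneg _) _)
      (fun k => ?_) (hsumΨ.mul_right (‖v‖ ^ s))
    rw [← Real.mul_rpow (norm_nonneg _) (norm_nonneg _)]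
    exact Real.rpow_le_rpow (norm_nonneg _) ((Ψ k).le_opNorm v) hs0.le
  have hblock : ∀ j : J (m t),
      (d t) ^ s * ∑ i ∈ tt t, w t i * ‖φ t i (z (m t) j)‖ ^ s
        ≤ ∑' k : I, ‖Ψ k (z (m t) j)‖ ^ s := by
    intro j
    set v := z (m t) j with hv
    have h1 : (d t) ^ s * ∑ i ∈ tt t, w t i * ‖φ t i v‖ ^ s
        = ∑ i : {i // i ∈ tt t}, ‖Ψ ⟨t, i⟩ v‖ ^ s := by
      rw [Finset.mul_sum, ← Finset.sum_coe_sort (tt t)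
        (fun i => (d t) ^ s * (w t i * ‖φ t i v‖ ^ s))]
      refine Finset.sum_congr rfl fun i _ => ?_
      rw [hΨapp ⟨t, i⟩ v, Real.mul_rpow (hc0 ⟨t, i⟩) (norm_nonneg _), hcs ⟨t, i⟩]
      ring
    rw [h1]
    have hemb : Function.Injective (fun i : {i // i ∈ tt t} => (⟨t, i⟩ : I)) := by
      intro a b hab
      simpa using hab
    calc ∑ i : {i // i ∈ tt t}, ‖Ψ ⟨t, i⟩ v‖ ^ s
        = ∑ k ∈ Finset.univ.map ⟨fun i : {i // i ∈ tt t} => (⟨t, i⟩ : I), hemb⟩,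
            ‖Ψ k v‖ ^ s := by rw [Finset.sum_map]; rfl
    _ ≤ ∑' k : I, ‖Ψ k v‖ ^ s :=
          Summable.sum_le_tsum _ (fun k _ => Real.rpow_nonneg (norm_nonneg _) _) (hsummz v)
  have hpow : ∀ a : ℝ, 0 ≤ a → ((a ^ s) ^ (q/s)) ^ (1/q) = a := by
    intro a ha
    rw [← Real.rpow_mul ha, ← Real.rpow_mul ha]
    rw [show s * (q/s) * (1/q) = 1 by field_simp]
    exact Real.rpow_one a
  have key : d t * ((∑ j : J (m t), (∑ i ∈ tt t, w t i * ‖φ t i (z (m t) j)‖ ^ s) ^ (q/s))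
      ^ (1/q)) ≤ C * P (m t) := by
    have hqs0 : (0:ℝ) ≤ q / s := by positivity
    have hstep : ∀ j : J (m t),
        ((d t) ^ s) ^ (q/s) * (∑ i ∈ tt t, w t i * ‖φ t i (z (m t) j)‖ ^ s) ^ (q/s)
          ≤ (∑' k : I, ‖Ψ k (z (m t) j)‖ ^ s) ^ (q/s) := by
      intro j
      rw [← Real.mul_rpow (Real.rpow_nonneg (hd0 t).le _)
        (Finset.sum_nonneg fun i hi => mul_nonneg (hw0 t i hi)
          (Real.rpow_nonneg (norm_nonneg _) _))]
      exact Real.rpow_le_rpow (mul_nonneg (Real.rpow_nonneg (hd0 t).le _)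
        (Finset.sum_nonneg fun i hi => mul_nonneg (hw0 t i hi)
          (Real.rpow_nonneg (norm_nonneg _) _))) (hblock j) hqs0
    have h2 : ((d t) ^ s) ^ (q/s)
          * ∑ j : J (m t), (∑ i ∈ tt t, w t i * ‖φ t i (z (m t) j)‖ ^ s) ^ (q/s)
        ≤ ∑ j : J (m t), (∑' k : I, ‖Ψ k (z (m t) j)‖ ^ s) ^ (q/s) := by
      rw [Finset.mul_sum]
      exact Finset.sum_le_sum fun j _ => hstep j
    have h3 := Real.rpow_le_rpow (mul_nonneg (Real.rpow_nonneg
      (Real.rpow_nonneg (hd0 t).le _) _) (Finset.sum_nonneg fun j _ =>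
        Real.rpow_nonneg (Finset.sum_nonneg fun i hi => mul_nonneg (hw0 t i hi)
          (Real.rpow_nonneg (norm_nonneg _) _)) _)) h2 (by positivity : (0:ℝ) ≤ 1/q)
    rw [Real.mul_rpow (by positivity) (Finset.sum_nonneg fun j _ =>
      Real.rpow_nonneg (Finset.sum_nonneg fun i hi => mul_nonneg (hw0 t i hi)
        (Real.rpow_nonneg (norm_nonneg _) _)) _), hpow (d t) (hd0 t).le] at h3
    exact h3.trans (hCb (m t))
  -- contradiction
  have hPt := hP (m t)
  have hviolpos : (0:ℝ) < (∑ j : J (m t),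
      (∑ i ∈ tt t, w t i * ‖φ t i (z (m t) j)‖ ^ s) ^ (q/s)) ^ (1/q) :=
    lt_of_le_of_lt (by positivity) (hlt t)
  rcases eq_or_lt_of_le hPt with hP0 | hPpos
  · have : (0:ℝ) < d t * ((∑ j : J (m t),
        (∑ i ∈ tt t, w t i * ‖φ t i (z (m t) j)‖ ^ s) ^ (q/s)) ^ (1/q)) :=
      mul_pos (hd0 t) hviolpos
    rw [← hP0, mul_zero] at key
    exact absurd key (not_le.mpr this)
  · have h4 : d t * ((4:ℝ)^t * P (m t)) < C * P (m t) :=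
      lt_of_lt_of_le (mul_lt_mul_of_pos_left (hlt t) (hd0 t)) key
    have h5 : d t * (4:ℝ)^t * P (m t) < C * P (m t) := by rw [mul_assoc]; exact h4
    have h6 : d t * (4:ℝ)^t < C := lt_of_mul_lt_mul_right h5 hPt
    have h7 : d t * (4:ℝ)^t = (2:ℝ)^t := by
      rw [hd, ← mul_pow]
      norm_num
    rw [h7] at h6
    exact absurd ht (not_lt.mpr h6.le)

end AuxC

section AuxD
variable {𝕂 : Type*} [RCLike 𝕂] {F : Type*} [NormedAddCommGroup F] [NormedSpace 𝕂 F]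

lemma rpow_tangent {θ X A : ℝ} (hθ0 : 0 < θ) (hθ1 : θ ≤ 1) (hX : 0 < X) (hA : 0 ≤ A) :
    A ^ θ ≤ X ^ θ + θ * X ^ (θ - 1) * (A - X) := by
  have h := Real.geom_mean_le_arith_mean2_weighted hθ0.le (by linarith : (0:ℝ) ≤ 1 - θ)
    (div_nonneg hA hX.le) zero_le_one (by ring)
  rw [Real.one_rpow, mul_one, mul_one] at h
  have hXθ : (0:ℝ) < X ^ θ := Real.rpow_pos_of_pos hX _
  rw [Real.div_rpow hA hX.le, div_le_iff₀ hXθ] at h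
  calc A ^ θ ≤ (θ * (A / X) + (1 - θ)) * X ^ θ := h
  _ = X ^ θ + θ * X ^ (θ - 1) * (A - X) := by
      rw [Real.rpow_sub hX, Real.rpow_one]
      field_simp
      ring

lemma mixedNorm_le_factor {J : Type*} [Fintype J] (s q : ℝ) (z : J → F) (τ : J → 𝕂)
    (y : J → F) (hzy : ∀ j, z j = τ j • y j) :
    mixedNorm 𝕂 s q z ≤ (if s = q then ⨆ j, ‖τ j‖
      else (∑ j, ‖τ j‖ ^ (1 / q - 1 / s)⁻¹) ^ (1 / q - 1 / s)) * weakLpNorm 𝕂 s y := by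
  refine csInf_le ⟨0, ?_⟩ ⟨τ, y, hzy, rfl⟩
  rintro c ⟨τ', y', -, rfl⟩
  refine mul_nonneg ?_ (wlp_nonneg s y')
  split_ifs
  · exact Real.iSup_nonneg fun j => norm_nonneg _
  · exact Real.rpow_nonneg
      (Finset.sum_nonneg fun j _ => Real.rpow_nonneg (norm_nonneg _) _) _

set_option maxHeartbeats 2000000 in
lemma mixed_bound {J : Type} [Fintype J] {s q : ℝ} (hq1 : 1 ≤ q) (hqs : q ≤ s)
    (z : J → F) (σ P : ℝ) (hσ : 0 ≤ σ) (hP : 0 ≤ P)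
    (hbound : ∀ (ι₀ : Type) (tt : Finset ι₀) (w : ι₀ → ℝ) (φ : ι₀ → F →L[𝕂] 𝕂),
      (∀ i ∈ tt, 0 ≤ w i) → (∑ i ∈ tt, w i) ≤ 1 → (∀ i ∈ tt, ‖φ i‖ ≤ 1) →
      (∑ j : J, (∑ i ∈ tt, w i * ‖φ i (z j)‖ ^ s) ^ (q/s)) ^ (1/q) ≤ σ * P) :
    mixedNorm 𝕂 s q z ≤ σ * P := by
  classical
  have hq0 : (0:ℝ) < q := lt_of_lt_of_le one_pos hq1
  have hs0 : (0:ℝ) < s := lt_of_lt_of_le hq0 hqs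
  rcases eq_or_lt_of_le hqs with heq | hlt
  · -- case s = q
    subst heq
    have hwz : weakLpNorm 𝕂 q z ≤ σ * P := by
      refine Real.iSup_le (fun φ => ?_) (mul_nonneg hσ hP)
      have hb := hbound PUnit Finset.univ (fun _ => 1) (fun _ => φ.1)
        (fun _ _ => zero_le_one) (by simp) (fun _ _ => φ.2)
      simpa [div_self hq0.ne'] using hb
    have h1 := mixedNorm_le_factor (𝕂 := 𝕂) q q z (fun _ => (1:𝕂)) z
      (fun j => (one_smul 𝕂 (z j)).symm)
    rw [if_pos rfl] at h1
    have h2 : (⨆ _ : J, ‖(1:𝕂)‖) ≤ 1 := Real.iSup_le (fun _ => by simp) zero_le_one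
    calc mixedNorm 𝕂 q q z ≤ (⨆ _ : J, ‖(1:𝕂)‖) * weakLpNorm 𝕂 q z := h1
    _ ≤ 1 * weakLpNorm 𝕂 q z := mul_le_mul_of_nonneg_right h2 (wlp_nonneg q z)
    _ = weakLpNorm 𝕂 q z := one_mul _
    _ ≤ σ * P := hwz
  · -- case q < s
    have hθ0 : (0:ℝ) < q/s := by positivity
    have hθ1 : q/s < 1 := (div_lt_one hs0).2 hlt
    set V : Set (J → ℝ) :=
      Set.range (fun φ : {φ : F →L[𝕂] 𝕂 // ‖φ‖ ≤ 1} => fun j => ‖φ.1 (z j)‖ ^ s) with hV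
    have hV0 : (fun _ : J => (0:ℝ)) ∈ V :=
      ⟨⟨0, by simp⟩, by funext j; simp [Real.zero_rpow hs0.ne']⟩
    set B : Set (J → ℝ) := Set.univ.pi (fun j => Set.Icc 0 (‖z j‖ ^ s)) with hB
    have hVB : V ⊆ B := by
      rintro _ ⟨φ, rfl⟩ j -
      refine ⟨Real.rpow_nonneg (norm_nonneg _) _, Real.rpow_le_rpow (norm_nonneg _) ?_ hs0.le⟩
      calc ‖φ.1 (z j)‖ ≤ ‖φ.1‖ * ‖z j‖ := φ.1.le_opNorm _
      _ ≤ 1 * ‖z j‖ := mul_le_mul_of_nonneg_right φ.2 (norm_nonneg _)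
      _ = ‖z j‖ := one_mul _
    have hBconv : Convex ℝ B := convex_pi fun j _ => convex_Icc _ _
    have hBclosed : IsClosed B := isClosed_set_pi fun j _ => isClosed_Icc
    have hBcpt : IsCompact B := isCompact_univ_pi fun j => isCompact_Icc
    set K := closure (convexHull ℝ V) with hK
    have hKB : K ⊆ B := closure_minimal (convexHull_min hVB hBconv) hBclosed
    have hKcpt : IsCompact K := hBcpt.of_isClosed_subset isClosed_closure hKB
    have hKconv : Convex ℝ K := (convex_convexHull ℝ V).closure
    have hVK : V ⊆ K := (subset_convexHull ℝ V).trans subset_closure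
    have hKne : K.Nonempty := ⟨_, hVK hV0⟩
    have hrpc : Continuous fun t : ℝ => t ^ (q/s) := by
      rw [continuous_iff_continuousAt]
      exact fun t => Real.continuousAt_rpow_const t _ (Or.inr hθ0.le)
    set Fo : (J → ℝ) → ℝ := fun b => ∑ j, b j ^ (q/s) with hFo
    have hFoc : Continuous Fo := continuous_finset_sum _ fun j _ => hrpc.comp (continuous_apply j)
    obtain ⟨a, haK, hamax⟩ := hKcpt.exists_isMaxOn hKne hFoc.continuousOn
    have ha0 : ∀ j, 0 ≤ a j := fun j => (hKB haK j (Set.mem_univ j)).1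
    set S := Fo a with hS
    have hS0 : 0 ≤ S := Finset.sum_nonneg fun j _ => Real.rpow_nonneg (ha0 j) _
    have hzero : ∀ j, z j = 0 → a j = 0 := by
      intro j hj
      have hsub : K ⊆ {b : J → ℝ | b j = 0} := by
        refine closure_minimal (convexHull_min ?_ ?_) ?_
        · rintro _ ⟨φ, rfl⟩
          simp [hj, Real.zero_rpow hs0.ne']
        · intro b1 hb1 b2 hb2 u v hu hv huv
          simp only [Set.mem_setOf_eq] at *
          simp [hb1, hb2]
        · exact isClosed_eq (continuous_apply j) continuous_const
      exact hsub haK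
    have hpos : ∀ j, z j ≠ 0 → 0 < a j := by
      intro j0 hzj
      rcases lt_or_eq_of_le (ha0 j0) with hlt0 | hEq
      · exact hlt0
      exfalso
      obtain ⟨φ, hφn, hφx⟩ := exists_dual_vector 𝕂 (z j0) (norm_ne_zero_iff.mpr hzj)
      set b : J → ℝ := fun j => ‖φ (z j)‖ ^ s with hb
      have hbV : b ∈ V := ⟨⟨φ, le_of_eq hφn⟩, rfl⟩
      have hbK : b ∈ K := hVK hbV
      have hb0 : ∀ j, 0 ≤ b j := fun j => Real.rpow_nonneg (norm_nonneg _) _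
      have hbj : b j0 = ‖z j0‖ ^ s := by
        show ‖φ (z j0)‖ ^ s = ‖z j0‖ ^ s
        rw [hφx, RCLike.norm_ofReal, abs_of_nonneg (norm_nonneg _)]
      set cθ : ℝ := b j0 ^ (q/s) with hcθ
      have hc0 : 0 < cθ :=
        Real.rpow_pos_of_pos (by rw [hbj]; exact Real.rpow_pos_of_pos (norm_pos_iff.mpr hzj) _) _
      have hcS : cθ ≤ S := by
        calc cθ = b j0 ^ (q/s) := rfl
        _ ≤ ∑ j, b j ^ (q/s) :=
            Finset.single_le_sum (fun j _ => Real.rpow_nonneg (hb0 j) _) (Finset.mem_univ j0)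
        _ ≤ S := hamax hbK
      have h1θ : (0:ℝ) < 1 - q/s := by linarith
      set t : ℝ := min (1/2) ((cθ / (2*(S+1))) ^ (1 - q/s)⁻¹) with ht
      have ht0 : 0 < t := lt_min (by norm_num) (Real.rpow_pos_of_pos (by positivity) _)
      have ht2 : t ≤ 1/2 := min_le_left _ _
      have ht1 : t < 1 := lt_of_le_of_lt ht2 (by norm_num)
      have htb : t ^ (1 - q/s) ≤ cθ / (2*(S+1)) := by
        calc t ^ (1 - q/s) ≤ ((cθ / (2*(S+1))) ^ (1 - q/s)⁻¹) ^ (1 - q/s) :=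
              Real.rpow_le_rpow ht0.le (min_le_right _ _) h1θ.le
        _ = cθ / (2*(S+1)) := by
              rw [← Real.rpow_mul (by positivity), inv_mul_cancel₀ h1θ.ne', Real.rpow_one]
      have hatK : (1 - t) • a + t • b ∈ K := hKconv haK hbK (by linarith) ht0.le (by ring)
      have hat : ∀ j, ((1 - t) • a + t • b) j = (1 - t) * a j + t * b j := fun j => by
        simp [smul_eq_mul]
      have hlow : (1-t) ^ (q/s) * S + t ^ (q/s) * cθ ≤ Fo ((1 - t) • a + t • b) := by
        have hsplit : Fo ((1 - t) • a + t • b) = ∑ j, ((1-t) * a j + t * b j) ^ (q/s) :=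
          Finset.sum_congr rfl fun j _ => by rw [hat j]
        have e1 : ∑ j ∈ Finset.univ.erase j0, ((1-t) * a j + t * b j) ^ (q/s)
            + ((1-t) * a j0 + t * b j0) ^ (q/s) = ∑ j, ((1-t) * a j + t * b j) ^ (q/s) :=
          Finset.sum_erase_add _ _ (Finset.mem_univ j0)
        have e2 : ∑ j ∈ Finset.univ.erase j0, a j ^ (q/s) + a j0 ^ (q/s) = S :=
          Finset.sum_erase_add _ _ (Finset.mem_univ j0)
        have e3 : ((1-t) * a j0 + t * b j0) ^ (q/s) = t ^ (q/s) * cθ := by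
          rw [← hEq, mul_zero, zero_add, Real.mul_rpow ht0.le (hb0 j0), hcθ]
        have e4 : ∀ j ∈ Finset.univ.erase j0,
            (1-t) ^ (q/s) * a j ^ (q/s) ≤ ((1-t) * a j + t * b j) ^ (q/s) := by
          intro j _
          rw [← Real.mul_rpow (by linarith : (0:ℝ) ≤ 1 - t) (ha0 j)]
          exact Real.rpow_le_rpow (mul_nonneg (by linarith) (ha0 j))
            (le_add_of_nonneg_right (mul_nonneg ht0.le (hb0 j))) hθ0.le
        have e5 : a j0 ^ (q/s) = 0 := by rw [← hEq, Real.zero_rpow hθ0.ne']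
        have e6 : (1-t) ^ (q/s) * S
            ≤ (1-t) ^ (q/s) * (∑ j ∈ Finset.univ.erase j0, a j ^ (q/s)) := by
          apply le_of_eq
          rw [← e2, e5, add_zero]
        calc (1-t) ^ (q/s) * S + t ^ (q/s) * cθ
            ≤ (1-t) ^ (q/s) * (∑ j ∈ Finset.univ.erase j0, a j ^ (q/s)) + t ^ (q/s) * cθ := by
              linarith
        _ = ∑ j ∈ Finset.univ.erase j0, (1-t) ^ (q/s) * a j ^ (q/s) + t ^ (q/s) * cθ := by
              rw [Finset.mul_sum]
        _ ≤ ∑ j ∈ Finset.univ.erase j0, ((1-t) * a j + t * b j) ^ (q/s) + t ^ (q/s) * cθ := by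
              have := Finset.sum_le_sum e4
              linarith
        _ = Fo ((1 - t) • a + t • b) := by rw [hsplit, ← e1, e3]
      have htt : t ^ (q/s) * t ^ (1 - q/s) = t := by
        rw [← Real.rpow_add ht0]
        norm_num
      have hfrac : cθ / (2*(S+1)) * S < cθ := by
        rw [div_mul_eq_mul_div, div_lt_iff₀ (by positivity)]
        nlinarith
      have hstrict : t ^ (1 - q/s) * S < cθ :=
        lt_of_le_of_lt (mul_le_mul_of_nonneg_right htb hS0) hfrac
      have hBt : t * S < t ^ (q/s) * cθ := by
        calc t * S = t ^ (q/s) * (t ^ (1 - q/s) * S) := by rw [← mul_assoc, htt]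
        _ < t ^ (q/s) * cθ :=
            mul_lt_mul_of_pos_left hstrict (Real.rpow_pos_of_pos ht0 _)
      have hA : (1-t) * S ≤ (1-t) ^ (q/s) * S := by
        refine mul_le_mul_of_nonneg_right ?_ hS0
        have h := Real.rpow_le_rpow_of_exponent_ge (by linarith : (0:ℝ) < 1 - t)
          (by linarith : 1 - t ≤ 1) hθ1.le
        rwa [Real.rpow_one] at h
      have hFat : Fo ((1 - t) • a + t • b) ≤ S := hamax hatK
      nlinarith
    -- first-order condition at the maximizer
    set Jp : Finset J := Finset.univ.filter (fun j => z j ≠ 0) with hJp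
    have hJpmem : ∀ j, j ∈ Jp ↔ z j ≠ 0 := by
      intro j
      simp [hJp]
    have hSrestrict : ∑ j ∈ Jp, a j ^ (q/s) = S := by
      rw [hS, hFo]
      refine Finset.sum_subset (Finset.subset_univ Jp) fun j _ hj => ?_
      have hzj : z j = 0 := by
        by_contra hne
        exact hj ((hJpmem j).2 hne)
      rw [hzero j hzj, Real.zero_rpow hθ0.ne']
    have hfoc : ∀ (φ : F →L[𝕂] 𝕂), ‖φ‖ ≤ 1 →
        ∑ j ∈ Jp, a j ^ (q/s - 1) * ‖φ (z j)‖ ^ s ≤ S := by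
      intro φ hφ
      set b : J → ℝ := fun j => ‖φ (z j)‖ ^ s with hb
      have hbV : b ∈ V := ⟨⟨φ, hφ⟩, rfl⟩
      have hbK : b ∈ K := hVK hbV
      have hb0 : ∀ j, 0 ≤ b j := fun j => Real.rpow_nonneg (norm_nonneg _) _
      have hg : ∀ t : ℝ, t ∈ Set.Ioc (0:ℝ) (1/2) →
          ∑ j ∈ Jp, (a j + t * (b j - a j)) ^ (q/s - 1) * (b j - a j) ≤ 0 := by
        intro t htmem
        obtain ⟨ht0, ht2⟩ := htmem
        have ht1 : t < 1 := lt_of_le_of_lt ht2 (by norm_num)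
        have hatK : (1 - t) • a + t • b ∈ K := hKconv haK hbK (by linarith) ht0.le (by ring)
        have hFat : Fo ((1 - t) • a + t • b) ≤ S := hamax hatK
        have hXpos : ∀ j ∈ Jp, 0 < a j + t * (b j - a j) := by
          intro j hj
          have haj : 0 < a j := hpos j ((hJpmem j).1 hj)
          have hrw : a j + t * (b j - a j) = (1-t) * a j + t * b j := by ring
          rw [hrw]
          have h1 : 0 < (1-t) * a j := mul_pos (by linarith) haj
          have h2 : 0 ≤ t * b j := mul_nonneg ht0.le (hb0 j)
          linarith
        have h1 : ∑ j ∈ Jp, a j ^ (q/s)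
            + (q/s) * t * (∑ j ∈ Jp, (a j + t * (b j - a j)) ^ (q/s - 1) * (b j - a j))
            ≤ ∑ j ∈ Jp, (a j + t * (b j - a j)) ^ (q/s) := by
          rw [Finset.mul_sum, ← Finset.sum_add_distrib]
          refine Finset.sum_le_sum fun j hj => ?_
          have hXp := hXpos j hj
          have htan := rpow_tangent hθ0 hθ1.le hXp (ha0 j)
          have hXd : a j - (a j + t * (b j - a j)) = -(t * (b j - a j)) := by ring
          rw [hXd] at htan
          nlinarith [htan]
        have h3 : ∑ j ∈ Jp, (a j + t * (b j - a j)) ^ (q/s) ≤ Fo ((1 - t) • a + t • b) := by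
          rw [hFo]
          have hcongr : ∀ j, ((1 - t) • a + t • b) j ^ (q/s) = ((1-t) * a j + t * b j) ^ (q/s) :=
            fun j => by simp [smul_eq_mul]
          have hsub : ∑ j ∈ Jp, (a j + t * (b j - a j)) ^ (q/s)
              = ∑ j ∈ Jp, ((1 - t) • a + t • b) j ^ (q/s) := by
            refine Finset.sum_congr rfl fun j _ => ?_
            rw [hcongr j]
            congr 1
            ring
          rw [hsub]
          refine Finset.sum_le_sum_of_subset_of_nonneg (Finset.subset_univ Jp) fun j _ _ => ?_
          rw [hcongr j]
          refine Real.rpow_nonneg ?_ _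
          have := ha0 j
          have := hb0 j
          nlinarith
        have h5 : (q/s) * t * (∑ j ∈ Jp, (a j + t * (b j - a j)) ^ (q/s - 1) * (b j - a j))
            ≤ (q/s) * t * 0 := by
          rw [mul_zero]
          linarith [hSrestrict]
        exact le_of_mul_le_mul_left h5 (mul_pos hθ0 ht0)
      have hcont : Filter.Tendsto
          (fun t : ℝ => ∑ j ∈ Jp, (a j + t * (b j - a j)) ^ (q/s - 1) * (b j - a j))
          (nhdsWithin 0 (Set.Ioi 0)) (nhds (∑ j ∈ Jp, a j ^ (q/s - 1) * (b j - a j))) := by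
        have hC : ∀ j ∈ Jp, Filter.Tendsto
            (fun t : ℝ => (a j + t * (b j - a j)) ^ (q/s - 1) * (b j - a j))
            (nhds 0) (nhds (a j ^ (q/s - 1) * (b j - a j))) := by
          intro j hj
          have haj : a j ≠ 0 := (hpos j ((hJpmem j).1 hj)).ne'
          have hinner : Filter.Tendsto (fun t : ℝ => a j + t * (b j - a j))
              (nhds 0) (nhds (a j)) := by
            have : Filter.Tendsto (fun t : ℝ => a j + t * (b j - a j)) (nhds 0)
                (nhds (a j + 0 * (b j - a j))) :=
              (continuous_const.add (continuous_id.mul continuous_const)).tendsto 0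
            simpa using this
          exact (hinner.rpow_const (Or.inl haj)).mul_const _
        exact (tendsto_finset_sum _ hC).mono_left nhdsWithin_le_nhds
      have hev : ∀ᶠ t in nhdsWithin (0:ℝ) (Set.Ioi 0),
          (fun t : ℝ => ∑ j ∈ Jp, (a j + t * (b j - a j)) ^ (q/s - 1) * (b j - a j)) t ≤ 0 := by
        filter_upwards [Ioc_mem_nhdsGT_of_mem
          (Set.left_mem_Ico.mpr (by norm_num : (0:ℝ) < 1/2))] with t ht
        exact hg t ht
      have hD : ∑ j ∈ Jp, a j ^ (q/s - 1) * (b j - a j) ≤ 0 := le_of_tendsto hcont hev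
      have hsum2 : ∑ j ∈ Jp, a j ^ (q/s - 1) * a j = ∑ j ∈ Jp, a j ^ (q/s) := by
        refine Finset.sum_congr rfl fun j hj => ?_
        have haj : 0 < a j := hpos j ((hJpmem j).1 hj)
        have h := (Real.rpow_add haj (q/s - 1) 1).symm
        rw [Real.rpow_one] at h
        rw [h]
        norm_num
      have hexpand2 : ∑ j ∈ Jp, a j ^ (q/s - 1) * ‖φ (z j)‖ ^ s
          = (∑ j ∈ Jp, a j ^ (q/s - 1) * (b j - a j)) + ∑ j ∈ Jp, a j ^ (q/s - 1) * a j := by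
        rw [← Finset.sum_add_distrib]
        refine Finset.sum_congr rfl fun j _ => ?_
        have hbj : b j = ‖φ (z j)‖ ^ s := rfl
        rw [← hbj]
        ring
      rw [hexpand2]
      linarith [hD, hsum2, hSrestrict]
    -- the closure bound : S ^ (1/q) ≤ σ * P
    have hSq : S ^ (1/q) ≤ σ * P := by
      set T : Set (J → ℝ) := {bb | (∑ j, bb j ^ (q/s)) ^ (1/q) ≤ σ * P} with hT
      have hTc : IsClosed T := by
        refine isClosed_le ?_ continuous_const
        exact hFoc.rpow_const fun x => Or.inr (by positivity)
      have hhull : convexHull ℝ V ⊆ T := by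
        intro bb hbb
        rw [convexHull_eq] at hbb
        obtain ⟨ι₀, tset, wgt, vv, hw0', hw1', hvv, hcm⟩ := hbb
        have hdec : ∀ i : ι₀, ∃ φ : F →L[𝕂] 𝕂, ‖φ‖ ≤ 1 ∧
            (i ∈ tset → vv i = fun j => ‖φ (z j)‖ ^ s) := by
          intro i
          by_cases hi : i ∈ tset
          · obtain ⟨φ, hφ⟩ := hvv i hi
            exact ⟨φ.1, φ.2, fun _ => hφ.symm⟩
          · exact ⟨0, by simp, fun hh => absurd hh hi⟩
        choose φf hφf1 hφf2 using hdec
        have hbbj : ∀ j, bb j = ∑ i ∈ tset, wgt i * ‖φf i (z j)‖ ^ s := by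
          intro j
          rw [← hcm, Finset.centerMass_eq_of_sum_1 _ _ hw1']
          rw [Finset.sum_apply]
          refine Finset.sum_congr rfl fun i hi => ?_
          rw [Pi.smul_apply, smul_eq_mul, hφf2 i hi]
        have hb2 := hbound ι₀ tset wgt φf hw0' (le_of_eq hw1') (fun i _ => hφf1 i)
        have : (∑ j, bb j ^ (q/s)) = ∑ j, (∑ i ∈ tset, wgt i * ‖φf i (z j)‖ ^ s) ^ (q/s) :=
          Finset.sum_congr rfl fun j _ => by rw [hbbj j]
        show (∑ j, bb j ^ (q/s)) ^ (1/q) ≤ σ * P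
        rw [this]
        exact hb2
      have haT : a ∈ T := closure_minimal hhull hTc haK
      exact haT
    -- assemble the factorization
    have h1θ : (0:ℝ) < 1 - q/s := by linarith
    set ee : ℝ := (1 - q/s)/s with hee
    have hee0 : 0 < ee := div_pos h1θ hs0
    set τ : J → 𝕂 := fun j => ((a j ^ ee : ℝ) : 𝕂) with hτ
    set y : J → F := fun j => (τ j)⁻¹ • z j with hy
    have hτzero : ∀ j, z j = 0 → τ j = 0 := by
      intro j hz
      rw [hτ]
      simp only
      rw [hzero j hz, Real.zero_rpow hee0.ne']
      exact RCLike.ofReal_zero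
    have hτne : ∀ j, z j ≠ 0 → τ j ≠ 0 := by
      intro j hz
      rw [hτ]
      simp only [ne_eq, RCLike.ofReal_eq_zero]
      exact (Real.rpow_pos_of_pos (hpos j hz) _).ne'
    have hzy : ∀ j, z j = τ j • y j := by
      intro j
      by_cases hz : z j = 0
      · rw [hy]
        simp [hz]
      · rw [hy, smul_smul, mul_inv_cancel₀ (hτne j hz), one_smul]
    have hτn : ∀ j, ‖τ j‖ = a j ^ ee := fun j => by
      rw [hτ, RCLike.norm_ofReal, abs_of_nonneg (Real.rpow_nonneg (ha0 j) _)]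
    have hmix := mixedNorm_le_factor (𝕂 := 𝕂) s q z τ y hzy
    rw [if_neg hlt.ne'] at hmix
    have hρ : (0:ℝ) < 1/q - 1/s := by
      rw [sub_pos]
      exact one_div_lt_one_div_of_lt hq0 hlt
    have hexp : ee * (1/q - 1/s)⁻¹ = q/s := by
      have h : ee = q/s * (1/q - 1/s) := by
        rw [hee]
        field_simp
      rw [h, mul_assoc, mul_inv_cancel₀ hρ.ne', mul_one]
    have hfac : (∑ j, ‖τ j‖ ^ (1/q - 1/s)⁻¹) = S := by
      rw [hS, hFo]
      refine Finset.sum_congr rfl fun j _ => ?_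
      rw [hτn j, ← Real.rpow_mul (ha0 j), hexp]
    have hwy : weakLpNorm 𝕂 s y ≤ S ^ (1/s) := by
      refine Real.iSup_le (fun φ => ?_) (Real.rpow_nonneg hS0 _)
      refine Real.rpow_le_rpow
        (Finset.sum_nonneg fun j _ => Real.rpow_nonneg (norm_nonneg _) _) ?_
        (by positivity)
      have hvan : ∀ j ∈ Finset.univ, j ∉ Jp → ‖φ.1 (y j)‖ ^ s = 0 := by
        intro j _ hj
        have hzj : z j = 0 := by
          by_contra hne
          exact hj ((hJpmem j).2 hne)
        rw [hy]
        simp [hzj, Real.zero_rpow hs0.ne']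
      have hterm : ∀ j ∈ Jp, ‖φ.1 (y j)‖ ^ s = a j ^ (q/s - 1) * ‖φ.1 (z j)‖ ^ s := by
        intro j hj
        have hzj : z j ≠ 0 := (hJpmem j).1 hj
        have haj : 0 < a j := hpos j hzj
        have happ : ‖φ.1 (y j)‖ = ‖τ j‖⁻¹ * ‖φ.1 (z j)‖ := by
          rw [hy]
          simp only [map_smul, smul_eq_mul, norm_mul, norm_inv]
        rw [happ, Real.mul_rpow (inv_nonneg.2 (norm_nonneg _)) (norm_nonneg _)]
        congr 1
        rw [hτn j, ← Real.rpow_neg (ha0 j), ← Real.rpow_mul (ha0 j)]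
        congr 1
        rw [hee]
        field_simp
        ring
      calc ∑ j, ‖φ.1 (y j)‖ ^ s = ∑ j ∈ Jp, ‖φ.1 (y j)‖ ^ s :=
            (Finset.sum_subset (Finset.subset_univ Jp) hvan).symm
      _ = ∑ j ∈ Jp, a j ^ (q/s - 1) * ‖φ.1 (z j)‖ ^ s := Finset.sum_congr rfl hterm
      _ ≤ S := hfoc φ.1 φ.2
    rcases eq_or_lt_of_le hS0 with hSz | hSpos
    · have hzf : (∑ j, ‖τ j‖ ^ (1/q - 1/s)⁻¹) ^ (1/q - 1/s) = 0 := by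
        rw [hfac, ← hSz, Real.zero_rpow hρ.ne']
      calc mixedNorm 𝕂 s q z
          ≤ (∑ j, ‖τ j‖ ^ (1/q - 1/s)⁻¹) ^ (1/q - 1/s) * weakLpNorm 𝕂 s y := hmix
      _ = 0 := by rw [hzf, zero_mul]
      _ ≤ σ * P := mul_nonneg hσ hP
    · calc mixedNorm 𝕂 s q z
          ≤ (∑ j, ‖τ j‖ ^ (1/q - 1/s)⁻¹) ^ (1/q - 1/s) * weakLpNorm 𝕂 s y := hmix
      _ ≤ S ^ (1/q - 1/s) * S ^ (1/s) := by
            rw [hfac]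
            exact mul_le_mul_of_nonneg_left hwy (Real.rpow_nonneg hS0 _)
      _ = S ^ (1/q) := by rw [← Real.rpow_add hSpos, sub_add_cancel]
      _ ≤ σ * P := hSq

end AuxD

end AllAux

universe uG

/-- Proposition `pp9`: if `u ∘ A` is multiple `(q;p₁,…,pₙ)`-summing for
every absolutely `s`-summing operator `u : F → G` (any Banach `G`), then `A` is multiple
`(s,q;p₁,…,pₙ)`-mixing summing. -/
theorem multipleMixingSumming_of_comp
    {𝕂 : Type*} [RCLike 𝕂] {n : ℕ} (hn : 1 ≤ n)
    (s q : ℝ) (p : Fin n → ℝ) (hp : ∀ k, 1 ≤ p k) (hpq : ∀ k, p k ≤ q) (hqs : q ≤ s)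
    (E : Fin n → Type*) [∀ i, NormedAddCommGroup (E i)] [∀ i, NormedSpace 𝕂 (E i)]
    [∀ i, CompleteSpace (E i)]
    (F : Type*) [NormedAddCommGroup F] [NormedSpace 𝕂 F] [CompleteSpace F]
    (A : ContinuousMultilinearMap 𝕂 E F)
    (h : ∀ (G : Type uG) [NormedAddCommGroup G] [NormedSpace 𝕂 G] [CompleteSpace G]
      (u : F →L[𝕂] G), AbsolutelySummingOp 𝕂 s u →
        MultipleSumming 𝕂 q p (fun x => u (A x))) :
    MultipleMixingSumming 𝕂 s q p (⇑A) := by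
  classical
  have hq1 : (1:ℝ) ≤ q := le_trans (hp ⟨0, hn⟩) (hpq ⟨0, hn⟩)
  have hq0 : (0:ℝ) < q := lt_of_lt_of_le one_pos hq1
  have hs1 : (1:ℝ) ≤ s := hq1.trans hqs
  have hP : ∀ mm : Σ m : ℕ, ((i : Fin n) → Fin m → E i),
      0 ≤ ∏ i, weakLpNorm 𝕂 (p i) (mm.2 i) :=
    fun mm => Finset.prod_nonneg fun i _ => wlp_nonneg _ _
  have H : ∀ (ι : Type) (ψ : ι → F →L[𝕂] 𝕂), Summable (fun k => ‖ψ k‖ ^ s) →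
      ∃ C, 0 ≤ C ∧ ∀ mm : Σ m : ℕ, ((i : Fin n) → Fin m → E i),
        (∑ j : Fin n → Fin mm.1,
            (∑' k, ‖ψ k (A fun i => mm.2 i (j i))‖ ^ s) ^ (q/s)) ^ (1/q)
          ≤ C * ∏ i, weakLpNorm 𝕂 (p i) (mm.2 i) := by
    intro ι ψ hψ
    obtain ⟨G, iG1, iG2, iG3, u, hu, hun⟩ := exists_comp hs1 ι ψ hψ
    obtain ⟨C, hC0, hCb⟩ := h G u hu
    refine ⟨C, hC0, fun mm => ?_⟩
    have hthis := hCb mm.1 mm.2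
    have hconv : ∀ j : Fin n → Fin mm.1, ‖u (A fun i => mm.2 i (j i))‖ ^ q
        = (∑' k, ‖ψ k (A fun i => mm.2 i (j i))‖ ^ s) ^ (q/s) := by
      intro j
      rw [hun, ← Real.rpow_mul (tsum_nonneg fun k => Real.rpow_nonneg (norm_nonneg _) _),
        one_div, inv_mul_eq_div]
    simp_rw [hconv] at hthis
    exact hthis
  obtain ⟨σ, hσ0, hσb⟩ := uniform_bound (M := Σ m : ℕ, ((i : Fin n) → Fin m → E i))
    (J := fun mm => Fin n → Fin mm.1) hs1 hq0
    (fun mm j => A fun i => mm.2 i (j i)) (fun mm => ∏ i, weakLpNorm 𝕂 (p i) (mm.2 i)) hP H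
  refine ⟨σ, hσ0, fun m x => ?_⟩
  exact mixed_bound hq1 hqs (fun j : Fin n → Fin m => A fun i => x i (j i)) σ
    (∏ i, weakLpNorm 𝕂 (p i) (x i)) hσ0 (hP ⟨m, x⟩)
    (fun ι₀ tt w φ hw0 hw1 hφ => hσb ⟨m, x⟩ ι₀ tt w φ hw0 hw1 hφ)
end
end

section
/- Let 𝕂 be ℝ or ℂ, let 0 < p_1, …, p_n ≤ q ≤ s < ∞ with s ≥ 1, and let E_1, …, E_n, F, G be Banach spaces over 𝕂. If A : E_1 × ⋯ × E_n → F is a continuous n-linear operator that is multiple (s,q;p_1,…,p_n)-mixing summing and u : F → G is an absolutely s-summing linear operator, then u ∘ A is multiple (q;p_1,…,p_n)-summing and ‖u ∘ A‖_{mas(q;p_1,…,p_n)} ≤ π_s(u) · ‖A‖_{mx(s,q;p_1,…,p_n)}. -/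
open scoped BigOperators
noncomputable section

section AuxLemmas

variable {𝕂 : Type*} [RCLike 𝕂]

lemma weakLpNorm_nonneg' {E : Type*} [NormedAddCommGroup E] [NormedSpace 𝕂 E]
    {J : Type*} [Fintype J] (q : ℝ) (x : J → E) : 0 ≤ weakLpNorm 𝕂 q x :=
  Real.iSup_nonneg fun _ => Real.rpow_nonneg
    (Finset.sum_nonneg fun _ _ => Real.rpow_nonneg (norm_nonneg _) _) _

lemma weakLpNorm_comp_equiv' {E : Type*} [NormedAddCommGroup E] [NormedSpace 𝕂 E]
    {J J' : Type*} [Fintype J] [Fintype J'] (r : ℝ) (y : J → E) (e : J' ≃ J) :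
    weakLpNorm 𝕂 r (y ∘ e) = weakLpNorm 𝕂 r y := by
  unfold weakLpNorm
  congr 1
  ext φ
  congr 1
  exact Fintype.sum_equiv e _ _ fun j => rfl

lemma absSumming_fintype' {F G : Type*} [NormedAddCommGroup F] [NormedSpace 𝕂 F]
    [NormedAddCommGroup G] [NormedSpace 𝕂 G] {s : ℝ} {u : F →L[𝕂] G} {C : ℝ}
    (hC : ∀ (k : ℕ) (y : Fin k → F),
      (∑ j : Fin k, ‖u (y j)‖ ^ s) ^ (1 / s) ≤ C * weakLpNorm 𝕂 s y)
    {J : Type*} [Fintype J] (y : J → F) :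
    (∑ j, ‖u (y j)‖ ^ s) ^ (1 / s) ≤ C * weakLpNorm 𝕂 s y := by
  have e := Fintype.equivFin J
  have h := hC (Fintype.card J) (y ∘ e.symm)
  rw [weakLpNorm_comp_equiv' (𝕂 := 𝕂) s y e.symm] at h
  calc (∑ j, ‖u (y j)‖ ^ s) ^ (1 / s)
      = (∑ j : Fin (Fintype.card J), ‖u ((y ∘ e.symm) j)‖ ^ s) ^ (1 / s) := by
        congr 1
        exact (Fintype.sum_equiv e.symm _ _ fun j => rfl).symm
    _ ≤ C * weakLpNorm 𝕂 s y := h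

lemma key_factor' {F G : Type*} [NormedAddCommGroup F] [NormedSpace 𝕂 F]
    [NormedAddCommGroup G] [NormedSpace 𝕂 G] {s q : ℝ} (hq : 0 < q) (hqs : q ≤ s)
    {u : F →L[𝕂] G} {C : ℝ}
    (hC : ∀ (k : ℕ) (y : Fin k → F),
      (∑ j : Fin k, ‖u (y j)‖ ^ s) ^ (1 / s) ≤ C * weakLpNorm 𝕂 s y)
    {J : Type*} [Fintype J] (τ : J → 𝕂) (y : J → F) :
    (∑ j, ‖u (τ j • y j)‖ ^ q) ^ (1 / q) ≤
      C * ((if s = q then ⨆ j, ‖τ j‖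
            else (∑ j, ‖τ j‖ ^ (1 / q - 1 / s)⁻¹) ^ (1 / q - 1 / s)) * weakLpNorm 𝕂 s y) := by
  have hq' : q ≠ 0 := hq.ne'
  have hnorm : ∀ j, ‖u (τ j • y j)‖ = ‖τ j‖ * ‖u (y j)‖ := fun j => by
    rw [map_smul, norm_smul]
  rcases eq_or_ne s q with hsq | hsq
  · subst hsq
    simp only [if_pos rfl]
    set M : ℝ := ⨆ j, ‖τ j‖ with hM
    have hM0 : 0 ≤ M := Real.iSup_nonneg fun _ => norm_nonneg _
    have hMj : ∀ j, ‖τ j‖ ≤ M := fun j =>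
      le_ciSup (Set.Finite.bddAbove (Set.finite_range fun j => ‖τ j‖)) j
    calc (∑ j, ‖u (τ j • y j)‖ ^ s) ^ (1 / s)
        ≤ (∑ j, (M * ‖u (y j)‖) ^ s) ^ (1 / s) := by
          apply Real.rpow_le_rpow (Finset.sum_nonneg fun _ _ => Real.rpow_nonneg (norm_nonneg _) _)
            _ (by positivity)
          apply Finset.sum_le_sum
          intro j _
          rw [hnorm j]
          exact Real.rpow_le_rpow (by positivity)
            (mul_le_mul_of_nonneg_right (hMj j) (norm_nonneg _)) (le_trans hq.le hqs)
      _ = M * (∑ j, ‖u (y j)‖ ^ s) ^ (1 / s) := by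
          rw [show (∑ j, (M * ‖u (y j)‖) ^ s) = M ^ s * ∑ j, ‖u (y j)‖ ^ s by
            rw [Finset.mul_sum]
            exact Finset.sum_congr rfl fun j _ => Real.mul_rpow hM0 (norm_nonneg _),
            Real.mul_rpow (by positivity) (Finset.sum_nonneg fun _ _ =>
              Real.rpow_nonneg (norm_nonneg _) _),
            one_div, Real.rpow_rpow_inv hM0 (hq.trans_le hqs).ne']
      _ ≤ M * (C * weakLpNorm 𝕂 s y) :=
          mul_le_mul_of_nonneg_left (absSumming_fintype' hC y) hM0
      _ = C * (M * weakLpNorm 𝕂 s y) := by ring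
  · have hqs' : q < s := lt_of_le_of_ne hqs (fun h => hsq h.symm)
    have hs0 : 0 < s := hq.trans hqs'
    simp only [if_neg hsq]
    set t : ℝ := 1 / q - 1 / s with ht
    have ht0 : 0 < t := by
      have := one_div_lt_one_div_of_lt hq hqs'
      simpa [ht, sub_pos] using this
    have hqt : q * t = 1 - q / s := by
      rw [ht, mul_sub, mul_one_div_cancel hq', mul_one_div]
    have hqt0 : 0 < q * t := mul_pos hq ht0
    have hqt1 : q * t < 1 := by
      rw [hqt]
      have : 0 < q / s := div_pos hq hs0
      linarith
    have hconj : Real.HolderConjugate (q * t)⁻¹ (s / q) := by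
      constructor
      · rw [inv_inv, inv_div, hqt, inv_one]
        ring
      · exact inv_pos.mpr hqt0
      · exact div_pos hs0 hq
    have hhold := Real.inner_le_Lp_mul_Lq_of_nonneg (s := Finset.univ)
      (f := fun j => ‖τ j‖ ^ q) (g := fun j => ‖u (y j)‖ ^ q) hconj
      (fun j _ => Real.rpow_nonneg (norm_nonneg _) _)
      (fun j _ => Real.rpow_nonneg (norm_nonneg _) _)
    have e1 : ∀ j : J, (‖τ j‖ ^ q) ^ (q * t)⁻¹ = ‖τ j‖ ^ t⁻¹ := fun j => by
      rw [← Real.rpow_mul (norm_nonneg _)]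
      congr 1
      rw [mul_inv]
      field_simp
    have e2 : ∀ j : J, (‖u (y j)‖ ^ q) ^ (s / q) = ‖u (y j)‖ ^ s := fun j => by
      rw [← Real.rpow_mul (norm_nonneg _)]
      congr 1
      field_simp
    rw [Finset.sum_congr rfl (fun j _ => e1 j), Finset.sum_congr rfl (fun j _ => e2 j)] at hhold
    have hA0 : (0:ℝ) ≤ ∑ j, ‖τ j‖ ^ t⁻¹ :=
      Finset.sum_nonneg fun _ _ => Real.rpow_nonneg (norm_nonneg _) _
    have hB0 : (0:ℝ) ≤ ∑ j, ‖u (y j)‖ ^ s :=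
      Finset.sum_nonneg fun _ _ => Real.rpow_nonneg (norm_nonneg _) _
    calc (∑ j, ‖u (τ j • y j)‖ ^ q) ^ (1 / q)
        = (∑ j, ‖τ j‖ ^ q * ‖u (y j)‖ ^ q) ^ (1 / q) := by
          congr 1
          exact Finset.sum_congr rfl fun j _ => by
            rw [hnorm j, Real.mul_rpow (norm_nonneg _) (norm_nonneg _)]
      _ ≤ ((∑ j, ‖τ j‖ ^ t⁻¹) ^ (1 / (q*t)⁻¹) * (∑ j, ‖u (y j)‖ ^ s) ^ (1 / (s/q))) ^ (1 / q) :=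
          Real.rpow_le_rpow (Finset.sum_nonneg fun _ _ => by positivity) hhold (by positivity)
      _ = (∑ j, ‖τ j‖ ^ t⁻¹) ^ t * (∑ j, ‖u (y j)‖ ^ s) ^ (1 / s) := by
          rw [Real.mul_rpow (Real.rpow_nonneg hA0 _) (Real.rpow_nonneg hB0 _),
            ← Real.rpow_mul hA0, ← Real.rpow_mul hB0]
          congr 1
          · congr 1
            rw [one_div, inv_inv]
            field_simp
          · congr 1
            rw [one_div_div]
            field_simp
      _ ≤ (∑ j, ‖τ j‖ ^ t⁻¹) ^ t * (C * weakLpNorm 𝕂 s y) :=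
          mul_le_mul_of_nonneg_left (absSumming_fintype' hC y) (Real.rpow_nonneg hA0 _)
      _ = C * ((∑ j, ‖τ j‖ ^ t⁻¹) ^ t * weakLpNorm 𝕂 s y) := by ring

lemma sum_le_C_mul_mixedNorm' {F G : Type*} [NormedAddCommGroup F] [NormedSpace 𝕂 F]
    [NormedAddCommGroup G] [NormedSpace 𝕂 G] {s q : ℝ} (hq : 0 < q) (hqs : q ≤ s)
    {u : F →L[𝕂] G} {C : ℝ} (hC0 : 0 ≤ C)
    (hC : ∀ (k : ℕ) (y : Fin k → F),
      (∑ j : Fin k, ‖u (y j)‖ ^ s) ^ (1 / s) ≤ C * weakLpNorm 𝕂 s y)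
    {J : Type*} [Fintype J] (z : J → F) :
    (∑ j, ‖u (z j)‖ ^ q) ^ (1 / q) ≤ C * mixedNorm 𝕂 s q z := by
  set S := { c : ℝ | ∃ τ : J → 𝕂, ∃ y : J → F, (∀ j, z j = τ j • y j) ∧
      c = (if s = q then ⨆ j, ‖τ j‖
           else (∑ j, ‖τ j‖ ^ (1 / q - 1 / s)⁻¹) ^ (1 / q - 1 / s)) * weakLpNorm 𝕂 s y } with hS
  have hne : S.Nonempty :=
    ⟨_, fun _ => (1 : 𝕂), z, fun j => (one_smul _ _).symm, rfl⟩
  have hbd : ∀ c ∈ S, (∑ j, ‖u (z j)‖ ^ q) ^ (1 / q) ≤ C * c := by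
    rintro c ⟨τ, y, hfac, rfl⟩
    have hk := key_factor' (u := u) hq hqs hC τ y
    calc (∑ j, ‖u (z j)‖ ^ q) ^ (1 / q)
        = (∑ j, ‖u (τ j • y j)‖ ^ q) ^ (1 / q) := by
          congr 1
          exact Finset.sum_congr rfl fun j _ => by rw [hfac j]
      _ ≤ _ := hk
  have hS0 : ∀ c ∈ S, 0 ≤ c := by
    rintro c ⟨τ, y, hfac, rfl⟩
    have hwk : 0 ≤ weakLpNorm 𝕂 s y := weakLpNorm_nonneg' s y
    apply mul_nonneg _ hwk
    split
    · exact Real.iSup_nonneg fun _ => norm_nonneg _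
    · exact Real.rpow_nonneg
        (Finset.sum_nonneg fun _ _ => Real.rpow_nonneg (norm_nonneg _) _) _
  have hmix : mixedNorm 𝕂 s q z = sInf S := rfl
  rw [hmix]
  rcases eq_or_lt_of_le hC0 with hCz | hCpos
  · obtain ⟨c, hc⟩ := hne
    have := hbd c hc
    rw [← hCz] at this ⊢
    simpa using this
  · have h1 : (∑ j, ‖u (z j)‖ ^ q) ^ (1 / q) / C ≤ sInf S :=
      le_csInf hne fun c hc => (div_le_iff₀ hCpos).mpr (by rw [mul_comm]; exact hbd c hc)
    have := (div_le_iff₀ hCpos).mp h1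
    linarith [this]

lemma le_sInf_mul_sInf' {S1 S2 : Set ℝ} {M : ℝ} (h1 : S1.Nonempty) (h2 : S2.Nonempty)
    (h1n : ∀ c ∈ S1, 0 ≤ c) (h2n : ∀ d ∈ S2, 0 ≤ d)
    (h : ∀ c ∈ S1, ∀ d ∈ S2, M ≤ c * d) : M ≤ sInf S1 * sInf S2 := by
  have ha : 0 ≤ sInf S1 := le_csInf h1 h1n
  have step1 : ∀ d ∈ S2, M ≤ sInf S1 * d := by
    intro d hd
    rcases eq_or_lt_of_le (h2n d hd) with h0 | hdpos
    · obtain ⟨c, hc⟩ := h1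
      have := h c hc d hd
      rw [← h0] at this ⊢
      simpa using this
    · have hdiv : M / d ≤ sInf S1 :=
        le_csInf h1 fun c hc => (div_le_iff₀ hdpos).mpr (h c hc d hd)
      exact (div_le_iff₀ hdpos).mp hdiv
  rcases eq_or_lt_of_le ha with h0 | hapos
  · obtain ⟨d, hd⟩ := h2
    have := step1 d hd
    rw [← h0] at this ⊢
    simpa using this
  · have hdiv : M / sInf S1 ≤ sInf S2 :=
      le_csInf h2 fun d hd => (div_le_iff₀ hapos).mpr (by rw [mul_comm]; exact step1 d hd)
    have := (div_le_iff₀ hapos).mp hdiv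
    linarith [this]

end AuxLemmas

/-- Proposition `pp99`: if `A` is multiple `(s,q;p₁,…,pₙ)`-mixing summing
and `u` is absolutely `s`-summing, then `u ∘ A` is multiple `(q;p₁,…,pₙ)`-summing with
`‖u ∘ A‖ ≤ π_s(u) · ‖A‖_{mx}`. -/
theorem comp_multipleSumming_of_mixing
    {𝕂 : Type*} [RCLike 𝕂] {n : ℕ} (hn : 1 ≤ n)
    (s q : ℝ) (p : Fin n → ℝ) (hp : ∀ k, 0 < p k) (hpq : ∀ k, p k ≤ q) (hqs : q ≤ s)
    (hs : 1 ≤ s)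
    (E : Fin n → Type*) [∀ i, NormedAddCommGroup (E i)] [∀ i, NormedSpace 𝕂 (E i)]
    [∀ i, CompleteSpace (E i)]
    (F : Type*) [NormedAddCommGroup F] [NormedSpace 𝕂 F] [CompleteSpace F]
    (G : Type*) [NormedAddCommGroup G] [NormedSpace 𝕂 G] [CompleteSpace G]
    (A : ContinuousMultilinearMap 𝕂 E F)
    (hA : MultipleMixingSumming 𝕂 s q p (⇑A))
    (u : F →L[𝕂] G) (hu : AbsolutelySummingOp 𝕂 s u) :
    MultipleSumming 𝕂 q p (fun x => u (A x)) ∧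
      masNorm 𝕂 q p (fun x => u (A x)) ≤ piNorm 𝕂 s u * mixingNorm 𝕂 s q p (⇑A) := by
  obtain ⟨C, hC0, hC⟩ := hu
  obtain ⟨σ, hσ0, hσ⟩ := hA
  have hq : 0 < q := (hp ⟨0, hn⟩).trans_le (hpq ⟨0, hn⟩)
  have main : ∀ (C' σ' : ℝ), 0 ≤ C' →
      (∀ (k : ℕ) (y : Fin k → F),
        (∑ j : Fin k, ‖u (y j)‖ ^ s) ^ (1 / s) ≤ C' * weakLpNorm 𝕂 s y) →
      (∀ (m : ℕ) (x : (i : Fin n) → Fin m → E i),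
        mixedNorm 𝕂 s q (fun j : Fin n → Fin m => A (fun i => x i (j i))) ≤
          σ' * ∏ i, weakLpNorm 𝕂 (p i) (x i)) →
      ∀ (m : ℕ) (x : (i : Fin n) → Fin m → E i),
        (∑ j : Fin n → Fin m, ‖u (A fun i => x i (j i))‖ ^ q) ^ (1 / q) ≤
          C' * σ' * ∏ i, weakLpNorm 𝕂 (p i) (x i) := by
    intro C' σ' hC0' hC' hσ' m x
    calc (∑ j : Fin n → Fin m, ‖u (A fun i => x i (j i))‖ ^ q) ^ (1 / q)
        ≤ C' * mixedNorm 𝕂 s q (fun j : Fin n → Fin m => A (fun i => x i (j i))) :=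
          sum_le_C_mul_mixedNorm' hq hqs hC0' hC' _
      _ ≤ C' * (σ' * ∏ i, weakLpNorm 𝕂 (p i) (x i)) :=
          mul_le_mul_of_nonneg_left (hσ' m x) hC0'
      _ = C' * σ' * ∏ i, weakLpNorm 𝕂 (p i) (x i) := (mul_assoc _ _ _).symm
  constructor
  · exact ⟨C * σ, mul_nonneg hC0 hσ0, main C σ hC0 hC hσ⟩
  · unfold masNorm piNorm mixingNorm
    apply le_sInf_mul_sInf'
    · exact ⟨C, hC0, hC⟩
    · exact ⟨σ, hσ0, hσ⟩
    · exact fun c hc => hc.1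
    · exact fun d hd => hd.1
    intro c hc d hd
    apply csInf_le ⟨0, fun x hx => hx.1⟩
    exact ⟨mul_nonneg hc.1 hd.1, main c d hc.1 hc.2 hd.2⟩
end
end
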